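/- Let k ∈ [n₁], 0 < ξ ≤ 1, 0 < μ ≤ 1, and let δ ≥ 0 and ν ≥ 0 satisfy 2(δ + ν + δν) ≤ ξ/√(2k). Let u ∈ ℂ^{n₁} with ‖u‖ = 1 and ‖u‖_[k] ≥ ξ, and let v ∈ ℂ^{n₂} with ‖v‖ = 1 and ‖v‖_∞ ≥ μ. Then the set J̃₁ := {j ∈ [n₁] : |u_j| ≥ 2(δ + ν + δν)} satisfies ‖Π_{J̃₁} u‖·‖v‖_∞ ≥ ξμ/√2. -/

import Mathlib

open scoped BigOperators
noncomputable section
open Classical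

/-- The ℓ₂ norm of a vector in ℂ^n. -/
def l2norm {n : ℕ} (x : Fin n → ℂ) : ℝ := Real.sqrt (∑ i, ‖x i‖ ^ 2)

/-- The Frobenius norm of a matrix. -/
def frobNorm {n₁ n₂ : ℕ} (X : Matrix (Fin n₁) (Fin n₂) ℂ) : ℝ :=
  Real.sqrt (∑ i, ∑ j, ‖X i j‖ ^ 2)

/-- The spectral norm (ℓ₂ operator norm) of a matrix. -/
def specNorm {n₁ n₂ : ℕ} (X : Matrix (Fin n₁) (Fin n₂) ℂ) : ℝ :=
  sSup {c : ℝ | ∃ x : Fin n₂ → ℂ, l2norm x = 1 ∧ c = l2norm (X.mulVec x)}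

/-- A vector is `s`-sparse if it has at most `s` nonzero entries. -/
def Sparse {n : ℕ} (s : ℕ) (x : Fin n → ℂ) : Prop :=
  {i | x i ≠ 0}.ncard ≤ s

/-- The linear map 𝒜 determined by the matrices A₁, …, A_m. -/
def opA {n₁ n₂ m : ℕ} (A : Fin m → Matrix (Fin n₁) (Fin n₂) ℂ)
    (X : Matrix (Fin n₁) (Fin n₂) ℂ) : Fin m → ℂ :=
  fun ℓ => ((A ℓ).conjTranspose * X).trace

/-- The adjoint 𝒜* of 𝒜 with respect to the Frobenius inner product. -/
def opAadj {n₁ n₂ m : ℕ} (A : Fin m → Matrix (Fin n₁) (Fin n₂) ℂ)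
    (z : Fin m → ℂ) : Matrix (Fin n₁) (Fin n₂) ℂ :=
  ∑ ℓ, z ℓ • A ℓ

/-- The (s₁, s₂, r)-restricted isometry property with constant δ. -/
def RIP {n₁ n₂ m : ℕ} (A : Fin m → Matrix (Fin n₁) (Fin n₂) ℂ)
    (s₁ s₂ r : ℕ) (δ : ℝ) : Prop :=
  ∀ X : Matrix (Fin n₁) (Fin n₂) ℂ, X.rank ≤ r →
    {i | X i ≠ 0}.ncard ≤ s₁ → {j | X.transpose j ≠ 0}.ncard ≤ s₂ →
    (1 - δ) * frobNorm X ^ 2 ≤ l2norm (opA A X) ^ 2 ∧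
      l2norm (opA A X) ^ 2 ≤ (1 + δ) * frobNorm X ^ 2

/-- The diagonal 0/1 projection matrix onto the coordinates in `J`. -/
def proj {n : ℕ} (J : Finset (Fin n)) : Matrix (Fin n) (Fin n) ℂ :=
  Matrix.diagonal fun i => if i ∈ J then 1 else 0

/-- The outer product u v^*. -/
def outer {n₁ n₂ : ℕ} (u : Fin n₁ → ℂ) (v : Fin n₂ → ℂ) :
    Matrix (Fin n₁) (Fin n₂) ℂ :=
  Matrix.of fun i j => u i * star (v j)

/-- The norm ‖x‖_[k] : the ℓ₂ norm of the best k-sparse approximation of x. -/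
def knorm {n : ℕ} (k : ℕ) (x : Fin n → ℂ) : ℝ :=
  sSup {c : ℝ | ∃ I : Finset (Fin n), I.card = k ∧ c = Real.sqrt (∑ i ∈ I, ‖x i‖ ^ 2)}

/-- The ℓ∞ norm of a vector. -/
def linftyNorm {n : ℕ} (x : Fin n → ℂ) : ℝ :=
  sSup {c : ℝ | ∃ i, c = ‖x i‖}

/-- The sine of the angle between two unit vectors. -/
def sinAngle {n : ℕ} (w v : Fin n → ℂ) : ℝ :=
  Real.sqrt (1 - ‖∑ i, star (w i) * v i‖ ^ 2)


/-- Peakiness of the pair (u, v) in terms of the sets of large entries. -/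
theorem peakiness_lower_bound {n₁ n₂ : ℕ} (k : ℕ) (hk1 : 1 ≤ k) (hkn : k ≤ n₁)
    (ξ μ : ℝ) (hξ0 : 0 < ξ) (hξ1 : ξ ≤ 1) (hμ0 : 0 < μ) (hμ1 : μ ≤ 1)
    (δ ν : ℝ) (hδ : 0 ≤ δ) (hν : 0 ≤ ν)
    (hsmall : 2 * (δ + ν + δ * ν) ≤ ξ / Real.sqrt (2 * k))
    (u : Fin n₁ → ℂ) (hu : l2norm u = 1) (hknorm : ξ ≤ knorm k u)
    (v : Fin n₂ → ℂ) (hv : l2norm v = 1) (hvinf : μ ≤ linftyNorm v) :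
    ξ * μ / Real.sqrt 2 ≤
      l2norm ((proj (Finset.univ.filter
          fun j => 2 * (δ + ν + δ * ν) ≤ ‖u j‖)).mulVec u) * linftyNorm v := by
  set τ := 2 * (δ + ν + δ * ν) with hτdef
  have hτ0 : 0 ≤ τ := by positivity
  set J := Finset.univ.filter (fun j : Fin n₁ => τ ≤ ‖u j‖) with hJ
  -- extract a witness I for the knorm
  have hSfin : ({c : ℝ | ∃ I : Finset (Fin n₁), I.card = k ∧
      c = Real.sqrt (∑ i ∈ I, ‖u i‖ ^ 2)}).Finite := by
    have hsub : {c : ℝ | ∃ I : Finset (Fin n₁), I.card = k ∧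
        c = Real.sqrt (∑ i ∈ I, ‖u i‖ ^ 2)}
        ⊆ Set.range (fun I : Finset (Fin n₁) => Real.sqrt (∑ i ∈ I, ‖u i‖ ^ 2)) := by
      rintro c ⟨I, -, rfl⟩; exact ⟨I, rfl⟩
    exact (Set.finite_range _).subset hsub
  have hSne : ({c : ℝ | ∃ I : Finset (Fin n₁), I.card = k ∧
      c = Real.sqrt (∑ i ∈ I, ‖u i‖ ^ 2)}).Nonempty := by
    obtain ⟨I, -, hI⟩ := Finset.exists_subset_card_eq (s := (Finset.univ : Finset (Fin n₁))) (n := k)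
      (by simpa using hkn)
    exact ⟨_, I, hI, rfl⟩
  have hmem := hSne.csSup_mem hSfin
  obtain ⟨I, hIcard, hIval⟩ := hmem
  have hknorm' : ξ ≤ Real.sqrt (∑ i ∈ I, ‖u i‖ ^ 2) := by
    rw [knorm] at hknorm
    rw [hIval] at hknorm
    exact hknorm
  have hξI : ξ ^ 2 ≤ ∑ i ∈ I, ‖u i‖ ^ 2 := by
    have h := Real.sq_sqrt (Finset.sum_nonneg fun i (_ : i ∈ I) => sq_nonneg ‖u i‖)
    nlinarith [hknorm', Real.sqrt_nonneg (∑ i ∈ I, ‖u i‖ ^ 2)]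
  -- bound sum over I \ J
  have hsplit : ∑ i ∈ I, ‖u i‖ ^ 2 = ∑ i ∈ I ∩ J, ‖u i‖ ^ 2 + ∑ i ∈ I \ J, ‖u i‖ ^ 2 :=
    (Finset.sum_inter_add_sum_sdiff I J _).symm
  have hdiff : ∑ i ∈ I \ J, ‖u i‖ ^ 2 ≤ (k : ℝ) * τ ^ 2 := by
    have hb : ∀ i ∈ I \ J, ‖u i‖ ^ 2 ≤ τ ^ 2 := by
      intro i hi
      have hiJ : ¬ τ ≤ ‖u i‖ := by
        rcases Finset.mem_sdiff.mp hi with ⟨-, hnJ⟩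
        simpa [hJ] using hnJ
      have := le_of_not_ge hiJ
      nlinarith [norm_nonneg (u i)]
    calc ∑ i ∈ I \ J, ‖u i‖ ^ 2 ≤ (I \ J).card • τ ^ 2 :=
          Finset.sum_le_card_nsmul _ _ _ hb
      _ = ((I \ J).card : ℝ) * τ ^ 2 := by simp [nsmul_eq_mul]
      _ ≤ (k : ℝ) * τ ^ 2 := by
          have hc : (I \ J).card ≤ k :=
            le_trans (Finset.card_le_card Finset.sdiff_subset) hIcard.le
          exact mul_le_mul_of_nonneg_right (by exact_mod_cast hc) (sq_nonneg τ)
  have h2k : (0 : ℝ) < 2 * k := by positivity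
  have hτsq : τ ^ 2 ≤ ξ ^ 2 / (2 * k) := by
    have h1 : τ ^ 2 ≤ (ξ / Real.sqrt (2 * k)) ^ 2 := by
      have := pow_le_pow_left₀ hτ0 hsmall 2
      simpa using this
    calc τ ^ 2 ≤ (ξ / Real.sqrt (2 * k)) ^ 2 := h1
      _ = ξ ^ 2 / (2 * k) := by rw [div_pow, Real.sq_sqrt h2k.le]
  have hkτ : (k : ℝ) * τ ^ 2 ≤ ξ ^ 2 / 2 := by
    have hk0 : (0 : ℝ) < k := by exact_mod_cast hk1
    have := mul_le_mul_of_nonneg_left hτsq hk0.le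
    calc (k : ℝ) * τ ^ 2 ≤ (k : ℝ) * (ξ ^ 2 / (2 * k)) := this
      _ = ξ ^ 2 / 2 := by field_simp
  have hJsum : ξ ^ 2 / 2 ≤ ∑ i ∈ J, ‖u i‖ ^ 2 := by
    have h1 : ∑ i ∈ I ∩ J, ‖u i‖ ^ 2 ≤ ∑ i ∈ J, ‖u i‖ ^ 2 :=
      Finset.sum_le_sum_of_subset_of_nonneg Finset.inter_subset_right
        (fun i _ _ => sq_nonneg ‖u i‖)
    linarith
  -- compute the projected l2 norm
  have hproj : l2norm ((proj J).mulVec u) = Real.sqrt (∑ i ∈ J, ‖u i‖ ^ 2) := by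
    unfold l2norm proj
    congr 1
    have key : ∀ i, (Matrix.diagonal fun i : Fin n₁ =>
        if i ∈ J then (1 : ℂ) else 0).mulVec u i = if i ∈ J then u i else 0 := by
      intro i
      rw [Matrix.mulVec_diagonal]
      split <;> simp
    simp_rw [key, apply_ite (fun z : ℂ => ‖z‖ ^ 2), norm_zero]
    simp [Finset.sum_ite_mem]
  have hl2 : ξ / Real.sqrt 2 ≤ l2norm ((proj J).mulVec u) := by
    rw [hproj]
    have heq : ξ / Real.sqrt 2 = Real.sqrt (ξ ^ 2 / 2) := by
      rw [Real.sqrt_div (sq_nonneg ξ), Real.sqrt_sq hξ0.le]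
    rw [heq]
    exact Real.sqrt_le_sqrt hJsum
  have hl2nn : (0 : ℝ) ≤ l2norm ((proj J).mulVec u) :=
    le_trans (by positivity) hl2
  calc ξ * μ / Real.sqrt 2 = (ξ / Real.sqrt 2) * μ := by ring
    _ ≤ l2norm ((proj J).mulVec u) * linftyNorm v :=
        mul_le_mul hl2 hvinf hμ0.le hl2nn

end
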